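/- Let (xₙ) be a sequence of nonzero vectors in a finite-dimensional real inner product space X such that the series ∑xₙ is *-potentially convergent. Then 0 lies in the convex hull of the set D of divergence directions of ∑xₙ, provided D is nonempty; more precisely, if D is nonempty and 0 ∉ conv(D), then ∑xₙ is not *-potentially convergent. -/

import Mathlib

open Filter Topology Set

lemma summable_norm_mono {X : Type*} [NormedAddCommGroup X] {x : ℕ → X} {s t : Set ℕ}
    (hst : s ⊆ t) (ht : Summable (fun n : t => ‖x n‖)) :
    Summable (fun n : s => ‖x n‖) := by
  have ht' : Summable (t.indicator fun n => ‖x n‖) :=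
    summable_subtype_iff_indicator.mp ht
  have hs' : Summable (s.indicator fun n => ‖x n‖) :=
    ht'.of_nonneg_of_le (fun n => Set.indicator_nonneg (fun _ _ => norm_nonneg _) n)
      (fun n => Set.indicator_le_indicator_of_subset hst (fun _ => norm_nonneg _) n)
  exact summable_subtype_iff_indicator.mpr hs'

lemma sum_extend_emb {ι κ M : Type*} [Fintype ι] [Fintype κ] [AddCommMonoid M]
    (e : ι ↪ κ) (F : ι → M) :
    ∑ j, Function.extend e F (fun _ => 0) j = ∑ i, F i := by
  classical
  rw [← Finset.sum_subset (Finset.subset_univ (Finset.univ.map e))]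
  · rw [Finset.sum_map]
    exact Finset.sum_congr rfl fun i _ => e.injective.extend_apply F _ i
  · intro j _ hj
    have h : ¬ ∃ i, e i = j := by
      rintro ⟨i, hi⟩
      exact hj (Finset.mem_map.mpr ⟨i, Finset.mem_univ _, hi⟩)
    exact Function.extend_apply' F _ j h

lemma isCompact_convexHull' {X : Type*} [NormedAddCommGroup X] [NormedSpace ℝ X]
    [FiniteDimensional ℝ X] {s : Set X} (hs : IsCompact s) (hsne : s.Nonempty) :
    IsCompact (convexHull ℝ s) := by
  classical
  obtain ⟨z₀, hz₀⟩ := hsne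
  set d := Module.finrank ℝ X + 1 with hd
  have himg : convexHull ℝ s =
      (fun p : (Fin d → ℝ) × (Fin d → X) => ∑ i, p.1 i • p.2 i) ''
        ((stdSimplex ℝ (Fin d)) ×ˢ (Set.univ.pi fun _ : Fin d => s)) := by
    apply Subset.antisymm
    · intro y hy
      obtain ⟨ι, hfin, z, w, hzs, hai, hwpos, hwsum, hwz⟩ :=
        eq_pos_convex_span_of_mem_convexHull hy
      have hcard : Fintype.card ι ≤ d := by
        refine hai.card_le_finrank_succ.trans ?_
        have := Submodule.finrank_le (vectorSpan ℝ (Set.range z))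
        omega
      obtain ⟨e⟩ : Nonempty (ι ↪ Fin d) :=
        Function.Embedding.nonempty_of_card_le (by simpa using hcard)
      set w' : Fin d → ℝ := Function.extend e w (fun _ => 0) with hw'
      set z' : Fin d → X := Function.extend e z (fun _ => z₀) with hz'
      have hw0 : ∀ j, 0 ≤ w' j := by
        intro j
        rcases em (∃ i, e i = j) with ⟨i, rfl⟩ | h
        · rw [hw', e.injective.extend_apply]; exact (hwpos i).le
        · rw [hw', Function.extend_apply' _ _ _ h]
      have hw1 : ∑ j, w' j = 1 := by rw [hw', sum_extend_emb e w, hwsum]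
      have hz's : ∀ j, z' j ∈ s := by
        intro j
        rcases em (∃ i, e i = j) with ⟨i, rfl⟩ | h
        · rw [hz', e.injective.extend_apply]; exact hzs ⟨i, rfl⟩
        · rw [hz', Function.extend_apply' _ _ _ h]; exact hz₀
      have heq : ∑ j, w' j • z' j = y := by
        have hpt : ∀ j, w' j • z' j = Function.extend e (fun i => w i • z i) (fun _ => 0) j := by
          intro j
          rcases em (∃ i, e i = j) with ⟨i, rfl⟩ | h
          · rw [hw', hz', e.injective.extend_apply, e.injective.extend_apply,
              e.injective.extend_apply]
          · rw [hw', hz', Function.extend_apply' _ _ _ h, Function.extend_apply' _ _ _ h,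
              Function.extend_apply' _ _ _ h]
            simp
        calc ∑ j, w' j • z' j
            = ∑ j, Function.extend e (fun i => w i • z i) (fun _ => 0) j :=
              Finset.sum_congr rfl fun j _ => hpt j
          _ = ∑ i, w i • z i := sum_extend_emb e _
          _ = y := hwz
      exact ⟨⟨w', z'⟩, ⟨⟨hw0, hw1⟩, fun j _ => hz's j⟩, heq⟩
    · rintro y ⟨⟨w, z⟩, ⟨⟨hw0, hw1⟩, hzs⟩, rfl⟩
      exact (convex_convexHull ℝ s).sum_mem (fun i _ => hw0 i) hw1
        (fun i _ => subset_convexHull ℝ s (hzs i (Set.mem_univ i)))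
  rw [himg]
  refine ((isCompact_stdSimplex (𝕜 := ℝ) (ι := Fin d)).prod (isCompact_univ_pi fun _ => hs)).image ?_
  exact continuous_finset_sum _ fun i _ =>
    (((continuous_apply i).comp continuous_fst).smul ((continuous_apply i).comp continuous_snd))

/-- `z` is a divergence direction of the series `∑ x n`. -/
def IsDivergenceDirection {X : Type*} [NormedAddCommGroup X] [InnerProductSpace ℝ X]
    (x : ℕ → X) (z : X) : Prop :=
  ‖z‖ = 1 ∧ ∀ ε : ℝ, 0 < ε →
    {n : ℕ | dist (‖x n‖⁻¹ • x n) z < ε}.Infinite ∧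
    ¬ Summable (fun n : {n : ℕ | dist (‖x n‖⁻¹ • x n) z < ε} => ‖x (n : ℕ)‖)

lemma summable_norm_mono' {X : Type*} [NormedAddCommGroup X] {x : ℕ → X} {s t : Set ℕ}
    (hst : s ⊆ t) (ht : Summable (fun n : t => ‖x n‖)) :
    Summable (fun n : s => ‖x n‖) := by
  have ht' : Summable (t.indicator fun n => ‖x n‖) :=
    summable_subtype_iff_indicator.mp ht
  have hs' : Summable (s.indicator fun n => ‖x n‖) :=
    ht'.of_nonneg_of_le (fun n => Set.indicator_nonneg (fun _ _ => norm_nonneg _) n)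
      (fun n => Set.indicator_le_indicator_of_subset hst (fun _ => norm_nonneg _) n)
  exact summable_subtype_iff_indicator.mpr hs'


lemma isClosed_divDir {X : Type*} [NormedAddCommGroup X] [InnerProductSpace ℝ X]
    (x : ℕ → X) : IsClosed {z : X | IsDivergenceDirection x z} := by
  rw [← closure_subset_iff_isClosed]
  intro z hz
  have hzn : ‖z‖ = 1 := by
    have h1 : closure {z : X | IsDivergenceDirection x z} ⊆ Metric.sphere (0 : X) 1 := by
      apply closure_minimal _ Metric.isClosed_sphere
      intro w hw
      simpa [mem_sphere_iff_norm] using hw.1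
    simpa [mem_sphere_iff_norm] using h1 hz
  refine ⟨hzn, fun ε hε => ?_⟩
  obtain ⟨z', hz', hdz⟩ := Metric.mem_closure_iff.mp hz (ε / 2) (by linarith)
  have hsub : {n : ℕ | dist (‖x n‖⁻¹ • x n) z' < ε / 2} ⊆
      {n : ℕ | dist (‖x n‖⁻¹ • x n) z < ε} := by
    intro n hn
    simp only [mem_setOf_eq] at hn ⊢
    calc dist (‖x n‖⁻¹ • x n) z ≤ dist (‖x n‖⁻¹ • x n) z' + dist z' z := dist_triangle _ _ _
      _ < ε / 2 + ε / 2 := by rw [dist_comm z' z]; exact add_lt_add hn hdz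
      _ = ε := by ring
  obtain ⟨hinf, hns⟩ := hz'.2 (ε / 2) (by linarith)
  exact ⟨hinf.mono hsub, fun hsummable => hns (summable_norm_mono' hsub hsummable)⟩

lemma summable_of_compact_no_divDir {X : Type*} [NormedAddCommGroup X] [InnerProductSpace ℝ X]
    (x : ℕ → X) {K : Set X} (hK : IsCompact K) (hKs : ∀ z ∈ K, ‖z‖ = 1)
    (hKD : ∀ z ∈ K, ¬ IsDivergenceDirection x z) :
    Summable (fun n : {n : ℕ | ‖x n‖⁻¹ • x n ∈ K} => ‖x n‖) := by
  classical
  -- for each z in K, choose a radius where the sum is summable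
  have key : ∀ z ∈ K, ∃ ε : ℝ, 0 < ε ∧
      Summable (fun n : {n : ℕ | dist (‖x n‖⁻¹ • x n) z < ε} => ‖x (n : ℕ)‖) := by
    intro z hz
    have h := hKD z hz
    rw [IsDivergenceDirection, not_and] at h
    have h2 := h (hKs z hz)
    push_neg at h2
    obtain ⟨ε, hε, hcase⟩ := h2
    refine ⟨ε, hε, ?_⟩
    by_cases hfin : {n : ℕ | dist (‖x n‖⁻¹ • x n) z < ε}.Infinite
    · exact hcase hfin
    · have : {n : ℕ | dist (‖x n‖⁻¹ • x n) z < ε}.Finite := not_infinite.mp hfin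
      have := this.to_subtype
      exact Summable.of_finite
  choose! ε hεpos hεsum using key
  -- compact cover
  obtain ⟨t, htK, hcover⟩ := hK.elim_nhds_subcover (fun z => Metric.ball z (ε z))
    (fun z hz => Metric.ball_mem_nhds z (hεpos z hz))
  -- comparison with a finite sum of indicators
  have hsummand : Summable (fun n : ℕ => ∑ z ∈ t,
      Set.indicator {m : ℕ | dist (‖x m‖⁻¹ • x m) z < ε z} (fun m => ‖x m‖) n) := by
    apply summable_sum
    intro z hzt
    exact summable_subtype_iff_indicator.mp (hεsum z (htK z hzt))
  have hind : Summable (Set.indicator {n : ℕ | ‖x n‖⁻¹ • x n ∈ K} (fun n => ‖x n‖)) := by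
    refine hsummand.of_nonneg_of_le
      (fun n => Set.indicator_nonneg (fun _ _ => norm_nonneg _) n) (fun n => ?_)
    by_cases hn : ‖x n‖⁻¹ • x n ∈ K
    · rw [Set.indicator_of_mem (show n ∈ {m : ℕ | ‖x m‖⁻¹ • x m ∈ K} from hn)]
      obtain ⟨z, hzt, hball⟩ := by
        have := hcover hn
        simpa only [Set.mem_iUnion, exists_prop] using this
      calc ‖x n‖
          = Set.indicator {m : ℕ | dist (‖x m‖⁻¹ • x m) z < ε z} (fun m => ‖x m‖) n := by
            rw [Set.indicator_of_mem (by simpa [Metric.mem_ball] using hball : _)]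
        _ ≤ _ := Finset.single_le_sum (f := fun z => Set.indicator
              {m : ℕ | dist (‖x m‖⁻¹ • x m) z < ε z} (fun m => ‖x m‖) n)
              (fun z' _ => Set.indicator_nonneg (fun _ _ => norm_nonneg _) n) hzt
    · rw [Set.indicator_of_notMem (show n ∉ {m : ℕ | ‖x m‖⁻¹ • x m ∈ K} from hn)]
      exact Finset.sum_nonneg fun z _ => Set.indicator_nonneg (fun _ _ => norm_nonneg _) n
  exact summable_subtype_iff_indicator.mpr hind

theorem stmt3
    {X : Type*} [NormedAddCommGroup X] [InnerProductSpace ℝ X] [FiniteDimensional ℝ X]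
    (x : ℕ → X) (hx : ∀ n, x n ≠ 0)
    (hne : {z : X | IsDivergenceDirection x z}.Nonempty)
    (h0 : (0 : X) ∉ convexHull ℝ {z : X | IsDivergenceDirection x z}) :
    ¬ (∀ f : X →L[ℝ] ℝ, ∃ σ : Equiv.Perm ℕ, ∃ r : ℝ,
        Tendsto (fun m => ∑ n ∈ Finset.range m, f (x (σ n))) atTop (𝓝 r)) := by
  intro H
  set D := {z : X | IsDivergenceDirection x z} with hD
  have hu : ∀ n, ‖‖x n‖⁻¹ • x n‖ = 1 := by
    intro n
    rw [norm_smul, norm_inv, norm_norm, inv_mul_cancel₀ (norm_ne_zero_iff.mpr (hx n))]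
  -- D is compact
  have hDcl : IsClosed D := isClosed_divDir x
  have hDb : D ⊆ Metric.closedBall 0 1 := by
    intro z hz
    simp only [Metric.mem_closedBall, dist_zero_right]
    exact hz.1.le
  have hDcomp : IsCompact D :=
    Metric.isCompact_iff_isClosed_bounded.mpr ⟨hDcl, Metric.isBounded_closedBall.subset hDb⟩
  have hCH : IsCompact (convexHull ℝ D) := isCompact_convexHull' hDcomp hne
  obtain ⟨f, c, hc0, hcd⟩ :=
    geometric_hahn_banach_point_closed (convex_convexHull ℝ D) hCH.isClosed h0
  have hcpos : 0 < c := by simpa using hc0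
  have hfD : ∀ z ∈ D, c < f z := fun z hz => hcd z (subset_convexHull ℝ D hz)
  obtain ⟨σ, r, hσ⟩ := H f
  -- basic formula
  have hfx : ∀ n, f (x n) = ‖x n‖ * f (‖x n‖⁻¹ • x n) := by
    intro n
    rw [map_smul, smul_eq_mul, ← mul_assoc, mul_inv_cancel₀ (norm_ne_zero_iff.mpr (hx n)),
      one_mul]
  -- the "small f" indices have summable norms
  set K : Set X := {w : X | ‖w‖ = 1 ∧ f w ≤ c / 2} with hK
  have hKcl : IsClosed K :=
    (isClosed_eq continuous_norm continuous_const).inter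
      (isClosed_le f.continuous continuous_const)
  have hKb : K ⊆ Metric.closedBall 0 1 := by
    intro z hz
    simp only [Metric.mem_closedBall, dist_zero_right]
    exact hz.1.le
  have hKcomp : IsCompact K :=
    Metric.isCompact_iff_isClosed_bounded.mpr ⟨hKcl, Metric.isBounded_closedBall.subset hKb⟩
  have hKnd : ∀ z ∈ K, ¬ IsDivergenceDirection x z := by
    intro z hz hdiv
    have h1 : c < f z := hfD z hdiv
    have h2 : f z ≤ c / 2 := hz.2
    linarith
  have hA0 : Summable (fun n : {n : ℕ | ‖x n‖⁻¹ • x n ∈ K} => ‖x n‖) :=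
    summable_of_compact_no_divDir x hKcomp (fun z hz => hz.1) hKnd
  set A : Set ℕ := {n : ℕ | f (‖x n‖⁻¹ • x n) ≤ c / 2} with hA
  have hAeq : {n : ℕ | ‖x n‖⁻¹ • x n ∈ K} = A := by
    ext n
    simp only [hK, hA, Set.mem_setOf_eq]
    exact ⟨fun h => h.2, fun h => ⟨hu n, h⟩⟩
  have hAsum : Summable (fun n : A => ‖x n‖) := hAeq ▸ hA0
  -- negative part is summable
  set g : ℕ → ℝ := fun n => max (-(f (x n))) 0 with hg
  have hgnonneg : ∀ n, 0 ≤ g n := fun n => le_max_right _ _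
  have hgsum : Summable g := by
    have hAind : Summable (A.indicator (fun m => ‖x m‖)) :=
      (summable_subtype_iff_indicator (f := fun m => ‖x m‖) (s := A)).mp hAsum
    have hmaj : Summable (fun n => ‖f‖ * A.indicator (fun m => ‖x m‖) n) :=
      hAind.mul_left ‖f‖
    refine hmaj.of_nonneg_of_le hgnonneg (fun n => ?_)
    by_cases hn : n ∈ A
    · rw [Set.indicator_of_mem hn]
      refine max_le ?_ (by positivity)
      calc -(f (x n)) ≤ |f (x n)| := neg_le_abs _
        _ = ‖f (x n)‖ := (Real.norm_eq_abs _).symm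
        _ ≤ ‖f‖ * ‖x n‖ := f.le_opNorm (x n)
    · rw [Set.indicator_of_notMem hn, mul_zero]
      have hfu : c / 2 < f (‖x n‖⁻¹ • x n) := not_le.mp hn
      have : 0 ≤ f (x n) := by
        rw [hfx n]
        apply mul_nonneg (norm_nonneg _)
        linarith
      simp [hg, max_eq_right, neg_nonpos.mpr this]
  -- positive part is not summable
  set p : ℕ → ℝ := fun n => max (f (x n)) 0 with hp
  have hpnonneg : ∀ n, 0 ≤ p n := fun n => le_max_right _ _
  obtain ⟨z₀, hz₀⟩ := hne
  set ε : ℝ := c / (2 * (‖f‖ + 1)) with hε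
  have hεpos : 0 < ε := by positivity
  set B : Set ℕ := {n : ℕ | c / 2 < f (‖x n‖⁻¹ • x n)} with hB
  have hsub : {n : ℕ | dist (‖x n‖⁻¹ • x n) z₀ < ε} ⊆ B := by
    intro n hn
    simp only [Set.mem_setOf_eq] at hn
    show c / 2 < f (‖x n‖⁻¹ • x n)
    have h1 : c < f z₀ := hfD z₀ hz₀
    have h2 : |f (‖x n‖⁻¹ • x n) - f z₀| ≤ ‖f‖ * dist (‖x n‖⁻¹ • x n) z₀ := by
      rw [← map_sub]
      calc |f (‖x n‖⁻¹ • x n - z₀)| = ‖f (‖x n‖⁻¹ • x n - z₀)‖ := (Real.norm_eq_abs _).symm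
        _ ≤ ‖f‖ * ‖‖x n‖⁻¹ • x n - z₀‖ := f.le_opNorm _
        _ = ‖f‖ * dist (‖x n‖⁻¹ • x n) z₀ := by rw [dist_eq_norm]
    have h3 : ‖f‖ * dist (‖x n‖⁻¹ • x n) z₀ ≤ ‖f‖ * ε :=
      mul_le_mul_of_nonneg_left hn.le (norm_nonneg _)
    have h4 : ‖f‖ * ε ≤ c / 2 := by
      rw [hε]
      rw [div_eq_iff (by positivity : (2 : ℝ) * (‖f‖ + 1) ≠ 0)] at *
      have hle : ‖f‖ ≤ ‖f‖ + 1 := by linarith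
      calc ‖f‖ * (c / (2 * (‖f‖ + 1))) ≤ (‖f‖ + 1) * (c / (2 * (‖f‖ + 1))) := by
            apply mul_le_mul_of_nonneg_right hle
            positivity
        _ = c / 2 := by
            field_simp
    have h5 : f z₀ - f (‖x n‖⁻¹ • x n) ≤ c / 2 := by
      have := abs_le.mp h2
      linarith [this.1]
    linarith
  have hBns : ¬ Summable (fun n : B => ‖x n‖) := by
    intro h
    exact (hz₀.2 ε hεpos).2 (summable_norm_mono' hsub h)
  have hpns : ¬ Summable p := by
    intro hps
    apply hBns
    have h1 : Summable (fun n : B => (2 / c) * p n) :=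
      (Summable.mul_left (2 / c) hps).subtype B
    refine h1.of_nonneg_of_le (fun n => norm_nonneg _) (fun n => ?_)
    have hn : c / 2 < f (‖x (n : ℕ)‖⁻¹ • x (n : ℕ)) := n.2
    have h2 : (c / 2) * ‖x (n : ℕ)‖ ≤ f (x (n : ℕ)) := by
      rw [hfx (n : ℕ), mul_comm]
      exact mul_le_mul_of_nonneg_left hn.le (norm_nonneg _)
    have h3 : f (x (n : ℕ)) ≤ p (n : ℕ) := le_max_left _ _
    have hc2 : (0:ℝ) < c / 2 := by positivity
    have hcc : (2 / c) * (c / 2) = 1 := by field_simp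
    calc ‖x (n : ℕ)‖ = (2 / c) * ((c / 2) * ‖x (n : ℕ)‖) := by
          rw [← mul_assoc, hcc, one_mul]
      _ ≤ (2 / c) * p (n : ℕ) :=
          mul_le_mul_of_nonneg_left (h2.trans h3) (by positivity)
  -- partial sums of rearranged positive part tend to infinity
  have hpσns : ¬ Summable (fun n => p (σ n)) := fun h => hpns ((Equiv.summable_iff σ).mp h)
  have hT : Tendsto (fun m => ∑ n ∈ Finset.range m, p (σ n)) atTop atTop :=
    (not_summable_iff_tendsto_nat_atTop_of_nonneg (fun n => hpnonneg _)).mp hpσns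
  have hgσ : Summable (fun n => g (σ n)) := (Equiv.summable_iff σ).mpr hgsum
  set N : ℝ := ∑' n, g (σ n) with hN
  have hbound : ∀ m, (∑ n ∈ Finset.range m, p (σ n)) + (-N) ≤
      ∑ n ∈ Finset.range m, f (x (σ n)) := by
    intro m
    have h1 : ∑ n ∈ Finset.range m, f (x (σ n)) =
        (∑ n ∈ Finset.range m, p (σ n)) - ∑ n ∈ Finset.range m, g (σ n) := by
      rw [← Finset.sum_sub_distrib]
      exact Finset.sum_congr rfl fun n _ => (max_zero_sub_max_neg_zero_eq_self _).symm
    have h2 : ∑ n ∈ Finset.range m, g (σ n) ≤ N :=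
      Summable.sum_le_tsum (Finset.range m) (fun n _ => hgnonneg _) hgσ
    rw [h1]
    linarith
  have hS : Tendsto (fun m => ∑ n ∈ Finset.range m, f (x (σ n))) atTop atTop :=
    tendsto_atTop_mono hbound (tendsto_atTop_add_const_right atTop (-N) hT)
  exact (not_tendsto_atTop_of_tendsto_nhds hσ) hS
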